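/- There exist a > 0 and λ ∈ (0,1) such that for every probability vector p, every t ∈ [0,1] and every β ∈ (1/2, 1], the following holds. Define, for continuous w : [0,1] → [0,∞), the transfer operator (Lw)(x) = Σ_{n≥1} p_n^t (x+n)^{−2β} w(1/(x+n)). If w satisfies w(x) ≤ exp(a|x−y|)·w(y) for all x, y ∈ [0,1], then the second iterate satisfies (L(Lw))(x) ≤ exp(λ·a·|x−y|)·(L(Lw))(y) for all x, y ∈ [0,1]. In other words, L² maps the cone C_a = {w ∈ C([0,1]) : w ≥ 0 and w(x) ≤ e^{a|x−y|}w(y)} into the smaller cone C_{λa}, uniformly in p, t and β. -/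

import Mathlib

open MeasureTheory Filter Set
open scoped ENNReal

instance : MeasurableSpace ℕ+ := ⊤

/-- The Gauss map `T x = 1/x - ⌊1/x⌋` (with `T 0 = 0`). -/
noncomputable def gaussMap (x : ℝ) : ℝ := if x = 0 then 0 else Int.fract x⁻¹

/-- Finite continued fraction approximants: `cfApprox n a` is the value of the
continued fraction `1/(a 0 + 1/(a 1 + ⋯))` truncated after `n` levels. -/
noncomputable def cfApprox : ℕ → (ℕ → ℕ+) → ℝ
  | 0, _ => 0
  | n + 1, a => (((a 0 : ℕ) : ℝ) + cfApprox n (fun k => a (k + 1)))⁻¹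

/-- The continued fraction coding map `Π : ℕ^ℕ → [0,1] ∖ ℚ`. -/
noncomputable def cfVal (a : ℕ → ℕ+) : ℝ := limUnder atTop (fun n => cfApprox n a)

/-- `p` is a countable probability vector `(p_n)_{n ≥ 1}`. -/
def IsProbVec (p : ℕ+ → ℝ) : Prop := (∀ n, 0 ≤ p n) ∧ HasSum p 1

/-- `m` is the Bernoulli product measure on `ℕ^ℕ` with weights `p`:
it assigns to each cylinder the product of the weights of its digits. -/
def IsBernoulli (p : ℕ+ → ℝ) (m : Measure (ℕ → ℕ+)) : Prop :=
  ∀ (n : ℕ) (i : ℕ → ℕ+),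
    m {a | ∀ k < n, a k = i k} = ENNReal.ofReal (∏ k ∈ Finset.range n, p (i k))

/-- Hausdorff dimension of a measure: `inf { dim_H A : μ A = 1 }`. -/
noncomputable def dimMeasure (μ : Measure ℝ) : ℝ≥0∞ :=
  ⨅ (A : Set ℝ) (_ : μ A = 1), dimH A


/-- The transfer operator `(L w)(x) = ∑_{n≥1} p_n^t (x+n)^{-2β} w(1/(x+n))` associated to
the potential `-β log|T'| + t f_p` for the Gauss map. -/
noncomputable def coneOp (p : ℕ+ → ℝ) (t β : ℝ) (w : ℝ → ℝ) : ℝ → ℝ :=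
  fun x => ∑' n : ℕ+,
    p n ^ t * ((x + ((n : ℕ) : ℝ)) ^ (2 * β))⁻¹ * w ((x + ((n : ℕ) : ℝ))⁻¹)

namespace ConeAux

lemma tsum_le_mul_tsum {f g : ℕ+ → ℝ} {c : ℝ} (hc : 0 < c)
    (hf : ∀ n, 0 ≤ f n) (hfg : ∀ n, f n ≤ c * g n) (hgf : ∀ n, g n ≤ c * f n) :
    ∑' n, f n ≤ c * ∑' n, g n := by
  have hg : ∀ n, 0 ≤ g n := by
    intro n; nlinarith [hf n, hfg n]
  by_cases hgs : Summable g
  · have hcg : Summable (fun n => c * g n) := hgs.mul_left c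
    have hfs : Summable f := Summable.of_nonneg_of_le hf hfg hcg
    calc ∑' n, f n ≤ ∑' n, c * g n := Summable.tsum_le_tsum hfg hfs hcg
      _ = c * ∑' n, g n := tsum_mul_left
  · have hfs : ¬ Summable f := by
      intro hfs
      exact hgs (Summable.of_nonneg_of_le hg hgf (hfs.mul_left c))
    rw [tsum_eq_zero_of_not_summable hfs, tsum_eq_zero_of_not_summable hgs, mul_zero]

lemma inv_rpow_bound {A B d s : ℝ} (hA : 1 ≤ A) (hB : 1 ≤ B)
    (hd : |A - B| ≤ d) (hs0 : 0 ≤ s) (hs2 : s ≤ 2) :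
    (A ^ s)⁻¹ ≤ Real.exp (2 * d) * (B ^ s)⁻¹ := by
  have hd0 : 0 ≤ d := le_trans (abs_nonneg _) hd
  have hA0 : (0:ℝ) < A := lt_of_lt_of_le one_pos hA
  have hB0 : (0:ℝ) < B := lt_of_lt_of_le one_pos hB
  have hApos : 0 < A ^ s := Real.rpow_pos_of_pos hA0 s
  have hBpos : 0 < B ^ s := Real.rpow_pos_of_pos hB0 s
  have hBA : B ≤ A * Real.exp d := by
    have h1 : B - A ≤ d := by
      have := le_abs_self (B - A); rw [abs_sub_comm] at this; linarith
    have h2 : 1 + d ≤ Real.exp d := by linarith [Real.add_one_le_exp d]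
    nlinarith
  have key : B ^ s ≤ Real.exp (2 * d) * A ^ s := by
    calc B ^ s ≤ (A * Real.exp d) ^ s := Real.rpow_le_rpow hB0.le hBA hs0
      _ = A ^ s * Real.exp (d * s) := by
          rw [Real.mul_rpow hA0.le (Real.exp_pos d).le,
            Real.rpow_def_of_pos (Real.exp_pos d), Real.log_exp]
      _ ≤ A ^ s * Real.exp (2 * d) := by
          apply mul_le_mul_of_nonneg_left _ hApos.le
          apply Real.exp_le_exp.mpr; nlinarith
      _ = Real.exp (2 * d) * A ^ s := mul_comm _ _
  rw [inv_eq_one_div, ← div_eq_mul_inv, div_le_div_iff₀ hApos hBpos, one_mul]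
  exact key

lemma generic_term {pm β D E : ℝ} (hpm : 0 ≤ pm) (hβ0 : 0 ≤ 2*β) (hβ2 : 2*β ≤ 2)
    (F : ℝ → ℝ) {A B : ℝ} (hA : 1 ≤ A) (hB : 1 ≤ B) (hAB : |A - B| ≤ D)
    (hF0 : 0 ≤ F B⁻¹) (hF0' : 0 ≤ F A⁻¹) (hF : F A⁻¹ ≤ Real.exp E * F B⁻¹) :
    pm * (A ^ (2*β))⁻¹ * F A⁻¹ ≤ Real.exp (2*D + E) * (pm * (B ^ (2*β))⁻¹ * F B⁻¹) := by
  have h1 := inv_rpow_bound hA hB hAB hβ0 hβ2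
  have hiB : (0:ℝ) ≤ (B ^ (2*β))⁻¹ :=
    inv_nonneg.mpr (Real.rpow_nonneg (by linarith) _)
  calc pm * (A ^ (2*β))⁻¹ * F A⁻¹
      ≤ pm * (Real.exp (2*D) * (B ^ (2*β))⁻¹) * (Real.exp E * F B⁻¹) := by
        apply mul_le_mul (mul_le_mul_of_nonneg_left h1 hpm) hF hF0'
        exact mul_nonneg hpm (mul_nonneg (Real.exp_pos _).le hiB)
    _ = Real.exp (2*D + E) * (pm * (B ^ (2*β))⁻¹ * F B⁻¹) := by
        rw [Real.exp_add]; ring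

lemma oneStep (p : ℕ+ → ℝ) (hp : ∀ n, 0 ≤ p n) (t β : ℝ)
    (hβ0 : 0 ≤ 2*β) (hβ2 : 2*β ≤ 2)
    (w : ℝ → ℝ) (hw0 : ∀ z ∈ Set.Icc (0:ℝ) 1, 0 ≤ w z)
    (hw : ∀ z ∈ Set.Icc (0:ℝ) 1, ∀ z' ∈ Set.Icc (0:ℝ) 1,
      w z ≤ Real.exp (8 * |z - z'|) * w z')
    {u v D : ℝ} (hu : u ∈ Set.Icc (0:ℝ) 1) (hv : v ∈ Set.Icc (0:ℝ) 1)
    (hD1 : |u - v| ≤ D) (hD2 : 4 * |u - v| ≤ D * ((u+1)*(v+1))) :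
    coneOp p t β w u ≤ Real.exp (4 * D) * coneOp p t β w v := by
  have hD0 : 0 ≤ D := le_trans (abs_nonneg _) hD1
  have key : ∀ u' v', u' ∈ Set.Icc (0:ℝ) 1 → v' ∈ Set.Icc (0:ℝ) 1 →
      |u' - v'| ≤ D → 4 * |u' - v'| ≤ D * ((u'+1)*(v'+1)) → ∀ m : ℕ+,
      p m ^ t * ((u' + ((m : ℕ) : ℝ)) ^ (2 * β))⁻¹ * w ((u' + ((m : ℕ) : ℝ))⁻¹)
        ≤ Real.exp (4 * D) *
          (p m ^ t * ((v' + ((m : ℕ) : ℝ)) ^ (2 * β))⁻¹ * w ((v' + ((m : ℕ) : ℝ))⁻¹)) := by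
    intro u' v' hu' hv' h1 h2 m
    have hM : (1:ℝ) ≤ ((m : ℕ) : ℝ) := by exact_mod_cast m.one_le
    set M : ℝ := ((m : ℕ) : ℝ) with hMdef
    have hA : 1 ≤ u' + M := by linarith [hu'.1]
    have hB : 1 ≤ v' + M := by linarith [hv'.1]
    have hA0 : (0:ℝ) < u' + M := by linarith
    have hB0 : (0:ℝ) < v' + M := by linarith
    have hAB : |(u' + M) - (v' + M)| ≤ D := by
      have e : (u' + M) - (v' + M) = u' - v' := by ring
      rw [e]; exact h1
    have memA : (u' + M)⁻¹ ∈ Set.Icc (0:ℝ) 1 :=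
      ⟨inv_nonneg.mpr hA0.le, inv_le_one_of_one_le₀ hA⟩
    have memB : (v' + M)⁻¹ ∈ Set.Icc (0:ℝ) 1 :=
      ⟨inv_nonneg.mpr hB0.le, inv_le_one_of_one_le₀ hB⟩
    have hdist : |(u' + M)⁻¹ - (v' + M)⁻¹| ≤ D / 4 := by
      have hABpos : (0:ℝ) < (u' + M) * (v' + M) := mul_pos hA0 hB0
      have e : (u' + M)⁻¹ - (v' + M)⁻¹ = (v' - u') / ((u' + M) * (v' + M)) := by
        field_simp; ring
      rw [e, abs_div, abs_of_pos hABpos, div_le_iff₀ hABpos]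
      have h3 : (u'+1)*(v'+1) ≤ (u' + M) * (v' + M) := by
        nlinarith [hu'.1, hv'.1]
      have h2' : 4 * |v' - u'| ≤ D * ((u'+1)*(v'+1)) := by
        rw [abs_sub_comm]; exact h2
      nlinarith [h2', h3, abs_nonneg (v' - u')]
    have hF : w ((u' + M)⁻¹) ≤ Real.exp (2 * D) * w ((v' + M)⁻¹) := by
      calc w ((u' + M)⁻¹)
          ≤ Real.exp (8 * |(u' + M)⁻¹ - (v' + M)⁻¹|) * w ((v' + M)⁻¹) :=
            hw _ memA _ memB
        _ ≤ Real.exp (2 * D) * w ((v' + M)⁻¹) := by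
            apply mul_le_mul_of_nonneg_right _ (hw0 _ memB)
            apply Real.exp_le_exp.mpr; linarith [hdist]
    have h := generic_term (Real.rpow_nonneg (hp m) t) hβ0 hβ2 w hA hB hAB
      (hw0 _ memB) (hw0 _ memA) hF
    rwa [show 2*D + 2*D = 4*D by ring] at h
  have nn : ∀ (z : ℝ), z ∈ Set.Icc (0:ℝ) 1 → ∀ m : ℕ+,
      0 ≤ p m ^ t * ((z + ((m : ℕ) : ℝ)) ^ (2 * β))⁻¹ * w ((z + ((m : ℕ) : ℝ))⁻¹) := by
    intro z hz m
    have hM : (1:ℝ) ≤ ((m : ℕ) : ℝ) := by exact_mod_cast m.one_le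
    have hA : 1 ≤ z + ((m : ℕ) : ℝ) := by linarith [hz.1]
    have mem : (z + ((m : ℕ) : ℝ))⁻¹ ∈ Set.Icc (0:ℝ) 1 :=
      ⟨inv_nonneg.mpr (by linarith), inv_le_one_of_one_le₀ hA⟩
    exact mul_nonneg (mul_nonneg (Real.rpow_nonneg (hp m) t)
      (inv_nonneg.mpr (Real.rpow_nonneg (by linarith) _))) (hw0 _ mem)
  show (∑' m : ℕ+, p m ^ t * ((u + ((m : ℕ) : ℝ)) ^ (2 * β))⁻¹ * w ((u + ((m : ℕ) : ℝ))⁻¹))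
      ≤ Real.exp (4 * D) *
        ∑' m : ℕ+, p m ^ t * ((v + ((m : ℕ) : ℝ)) ^ (2 * β))⁻¹ * w ((v + ((m : ℕ) : ℝ))⁻¹)
  refine tsum_le_mul_tsum (Real.exp_pos _) (nn u hu) (key u v hu hv hD1 hD2) ?_
  refine key v u hv hu (by rwa [abs_sub_comm]) ?_
  rw [abs_sub_comm, mul_comm (v+1) (u+1)]; exact hD2

end ConeAux

/-- **Uniform cone contraction** (from Lemma 4.11): there are `a > 0` and `λ ∈ (0,1)` such
that for every probability vector `p`, every `t ∈ [0,1]` and `β ∈ (1/2, 1]`, the second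
iterate `L²` of the transfer operator maps the cone
`C_a = {w ∈ C([0,1]) : w ≥ 0, w(x) ≤ e^{a|x-y|} w(y)}` into `C_{λa}`. -/
theorem cone_contraction :
    ∃ a : ℝ, 0 < a ∧ ∃ lam : ℝ, lam ∈ Set.Ioo (0 : ℝ) 1 ∧
      ∀ (p : ℕ+ → ℝ), IsProbVec p →
        ∀ t ∈ Set.Icc (0 : ℝ) 1, ∀ β ∈ Set.Ioc (1 / 2 : ℝ) 1,
          ∀ w : ℝ → ℝ, ContinuousOn w (Set.Icc 0 1) →
            (∀ x ∈ Set.Icc (0 : ℝ) 1, 0 ≤ w x) →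
            (∀ x ∈ Set.Icc (0 : ℝ) 1, ∀ y ∈ Set.Icc (0 : ℝ) 1,
              w x ≤ Real.exp (a * |x - y|) * w y) →
            ∀ x ∈ Set.Icc (0 : ℝ) 1, ∀ y ∈ Set.Icc (0 : ℝ) 1,
              coneOp p t β (coneOp p t β w) x ≤
                Real.exp (lam * a * |x - y|) * coneOp p t β (coneOp p t β w) y := by
  refine ⟨8, by norm_num, 7/8, ⟨by norm_num, by norm_num⟩, ?_⟩
  intro p hpv t ht β hβ w hwc hw0 hw x hx y hy
  have hp : ∀ n, 0 ≤ p n := hpv.1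
  have hβ0 : 0 ≤ 2*β := by linarith [hβ.1]
  have hβ2 : 2*β ≤ 2 := by linarith [hβ.2]
  set W : ℝ → ℝ := coneOp p t β w with hWdef
  have hW0 : ∀ z ∈ Set.Icc (0:ℝ) 1, 0 ≤ W z := by
    intro z hz
    apply tsum_nonneg
    intro m
    have hM : (1:ℝ) ≤ ((m : ℕ) : ℝ) := by exact_mod_cast m.one_le
    have hA : 1 ≤ z + ((m : ℕ) : ℝ) := by linarith [hz.1]
    have mem : (z + ((m : ℕ) : ℝ))⁻¹ ∈ Set.Icc (0:ℝ) 1 :=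
      ⟨inv_nonneg.mpr (by linarith), inv_le_one_of_one_le₀ hA⟩
    exact mul_nonneg (mul_nonneg (Real.rpow_nonneg (hp m) t)
      (inv_nonneg.mpr (Real.rpow_nonneg (by linarith) _))) (hw0 _ mem)
  set d : ℝ := |x - y| with hddef
  have hd0 : 0 ≤ d := abs_nonneg _
  have okey : ∀ x' y', x' ∈ Set.Icc (0:ℝ) 1 → y' ∈ Set.Icc (0:ℝ) 1 →
      |x' - y'| = d → ∀ n : ℕ+,
      p n ^ t * ((x' + ((n : ℕ) : ℝ)) ^ (2 * β))⁻¹ * W ((x' + ((n : ℕ) : ℝ))⁻¹)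
        ≤ Real.exp (7/8 * 8 * d) *
          (p n ^ t * ((y' + ((n : ℕ) : ℝ)) ^ (2 * β))⁻¹ * W ((y' + ((n : ℕ) : ℝ))⁻¹)) := by
    intro x' y' hx' hy' habs n
    have hN : (1:ℝ) ≤ ((n : ℕ) : ℝ) := by exact_mod_cast n.one_le
    set N : ℝ := ((n : ℕ) : ℝ) with hNdef
    have hA : 1 ≤ x' + N := by linarith [hx'.1]
    have hB : 1 ≤ y' + N := by linarith [hy'.1]
    have hA0 : (0:ℝ) < x' + N := by linarith
    have hB0 : (0:ℝ) < y' + N := by linarith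
    have hABpos : (0:ℝ) < (x' + N) * (y' + N) := mul_pos hA0 hB0
    set u : ℝ := (x' + N)⁻¹ with hudef
    set v : ℝ := (y' + N)⁻¹ with hvdef
    have memu : u ∈ Set.Icc (0:ℝ) 1 := ⟨inv_nonneg.mpr hA0.le, inv_le_one_of_one_le₀ hA⟩
    have memv : v ∈ Set.Icc (0:ℝ) 1 := ⟨inv_nonneg.mpr hB0.le, inv_le_one_of_one_le₀ hB⟩
    have keyuv : |u - v| * ((x' + N) * (y' + N)) = d := by
      have e : u - v = (y' - x') / ((x' + N) * (y' + N)) := by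
        rw [hudef, hvdef]; field_simp; ring
      rw [e, abs_div, abs_of_pos hABpos, div_mul_cancel₀ _ hABpos.ne', abs_sub_comm, habs]
    have hd1 : |u - v| ≤ d := by
      have h1 : (1:ℝ) ≤ (x' + N) * (y' + N) := by nlinarith
      calc |u - v| ≤ |u - v| * ((x' + N) * (y' + N)) :=
            le_mul_of_one_le_right (abs_nonneg _) h1
        _ = d := keyuv
    have hd2 : 4 * |u - v| ≤ d * ((u+1)*(v+1)) := by
      have eu : (x' + N) * (u + 1) = 1 + (x' + N) := by
        rw [hudef, mul_add, mul_inv_cancel₀ hA0.ne', mul_one]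
      have ev : (y' + N) * (v + 1) = 1 + (y' + N) := by
        rw [hvdef, mul_add, mul_inv_cancel₀ hB0.ne', mul_one]
      have h4 : (4:ℝ) ≤ (1 + (x' + N)) * (1 + (y' + N)) := by nlinarith
      calc 4 * |u - v| ≤ |u - v| * ((1 + (x' + N)) * (1 + (y' + N))) := by
            nlinarith [abs_nonneg (u - v)]
        _ = (|u - v| * ((x' + N) * (y' + N))) * ((u+1)*(v+1)) := by
            rw [← eu, ← ev]; ring
        _ = d * ((u+1)*(v+1)) := by rw [keyuv]
    have hWcone : W u ≤ Real.exp (4 * d) * W v :=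
      ConeAux.oneStep p hp t β hβ0 hβ2 w hw0 hw memu memv hd1 hd2
    have hAB : |(x' + N) - (y' + N)| ≤ d := by
      have e : (x' + N) - (y' + N) = x' - y' := by ring
      rw [e, habs]
    have h := ConeAux.generic_term (Real.rpow_nonneg (hp n) t) hβ0 hβ2 W hA hB hAB
      (hW0 _ memv) (hW0 _ memu) hWcone
    refine le_trans h ?_
    apply mul_le_mul_of_nonneg_right
    · apply Real.exp_le_exp.mpr; nlinarith
    · have hiB : (0:ℝ) ≤ ((y' + N) ^ (2*β))⁻¹ :=
        inv_nonneg.mpr (Real.rpow_nonneg (by linarith) _)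
      exact mul_nonneg (mul_nonneg (Real.rpow_nonneg (hp n) t) hiB) (hW0 _ memv)
  have nn : ∀ (z : ℝ), z ∈ Set.Icc (0:ℝ) 1 → ∀ m : ℕ+,
      0 ≤ p m ^ t * ((z + ((m : ℕ) : ℝ)) ^ (2 * β))⁻¹ * W ((z + ((m : ℕ) : ℝ))⁻¹) := by
    intro z hz m
    have hM : (1:ℝ) ≤ ((m : ℕ) : ℝ) := by exact_mod_cast m.one_le
    have hA : 1 ≤ z + ((m : ℕ) : ℝ) := by linarith [hz.1]
    have mem : (z + ((m : ℕ) : ℝ))⁻¹ ∈ Set.Icc (0:ℝ) 1 :=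
      ⟨inv_nonneg.mpr (by linarith), inv_le_one_of_one_le₀ hA⟩
    exact mul_nonneg (mul_nonneg (Real.rpow_nonneg (hp m) t)
      (inv_nonneg.mpr (Real.rpow_nonneg (by linarith) _))) (hW0 _ mem)
  show (∑' n : ℕ+, p n ^ t * ((x + ((n : ℕ) : ℝ)) ^ (2 * β))⁻¹ * W ((x + ((n : ℕ) : ℝ))⁻¹))
      ≤ Real.exp (7/8 * 8 * d) *
        ∑' n : ℕ+, p n ^ t * ((y + ((n : ℕ) : ℝ)) ^ (2 * β))⁻¹ * W ((y + ((n : ℕ) : ℝ))⁻¹)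
  exact ConeAux.tsum_le_mul_tsum (Real.exp_pos _) (nn x hx) (okey x y hx hy rfl)
    (okey y x hy hx (abs_sub_comm y x))
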